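/- arXiv:1212.2058 — 2 statements merged into one kernel-verified Lean document; each statement's English description precedes it below -/
import Mathlib

section
/- Let R = [a,b]×[c,d] be an axis-aligned rectangle, let c_V be a curve contained in R joining a point on the top edge {y=d} to a point on the bottom edge {y=c}, and let c_H be a curve contained in R joining a point on the left edge {x=a} to a point on the right edge {x=b}. Then c_V and c_H have a point in common. -/
open Set

section Aux
open Real



noncomputable section CrossAux

/-- clamp to `[0,1]` -/
def clamp (x : ℝ) : ℝ := max 0 (min 1 x)

lemma clamp_mem (x : ℝ) : clamp x ∈ Icc (0:ℝ) 1 :=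
  ⟨le_max_left _ _, max_le (by norm_num) (min_le_left _ _)⟩

lemma clamp_continuous : Continuous clamp :=
  continuous_const.max (continuous_const.min continuous_id)

lemma clamp_of_nonpos {x : ℝ} (h : x ≤ 0) : clamp x = 0 := by
  simp only [clamp]
  rw [min_eq_right (h.trans zero_le_one), max_eq_left h]

lemma clamp_of_one_le {x : ℝ} (h : 1 ≤ x) : clamp x = 1 := by
  simp only [clamp]
  rw [min_eq_left h, max_eq_right zero_le_one]

/-- boundary loop of the unit square, counterclockwise starting at the origin -/
def sqLoop (t : ℝ) : ℝ × ℝ :=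
  if t ≤ 1/4 then (4*t, 0)
  else if t ≤ 1/2 then (1, 4*t - 1)
  else if t ≤ 3/4 then (3 - 4*t, 1)
  else (0, 4 - 4*t)

lemma sqLoop_continuous : Continuous sqLoop := by
  unfold sqLoop
  apply Continuous.if_le _ _ continuous_id continuous_const
  · intro x hx; subst hx; norm_num
  · exact (continuous_const.mul continuous_id).prodMk continuous_const
  · apply Continuous.if_le _ _ continuous_id continuous_const
    · intro x hx; subst hx; norm_num
    · exact continuous_const.prodMk ((continuous_const.mul continuous_id).sub continuous_const)
    · apply Continuous.if_le _ _ continuous_id continuous_const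
      · intro x hx; subst hx; norm_num
      · exact (continuous_const.sub (continuous_const.mul continuous_id)).prodMk continuous_const
      · exact continuous_const.prodMk (continuous_const.sub (continuous_const.mul continuous_id))

lemma sqLoop_zero : sqLoop 0 = (0, 0) := by norm_num [sqLoop]

lemma sqLoop_one : sqLoop 1 = (0, 0) := by norm_num [sqLoop]

/-- the reference loop in the circle, clockwise starting at angle `π/4` -/
def eloop (t : ℝ) : ℂ := Complex.exp (↑(π/4 - 2*π*t) * Complex.I)

lemma eloop_continuous : Continuous eloop := by
  unfold eloop
  fun_prop

lemma eloop_ne_zero (t : ℝ) : eloop t ≠ 0 := Complex.exp_ne_zero _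

lemma eloop_re (t : ℝ) : (eloop t).re = Real.cos (π/4 - 2*π*t) := by
  unfold eloop
  rw [Complex.exp_mul_I]
  norm_cast
  simp only [Complex.add_re, Complex.ofReal_re, Complex.mul_re, Complex.I_re, Complex.I_im, Complex.ofReal_im]
  ring

lemma eloop_im (t : ℝ) : (eloop t).im = Real.sin (π/4 - 2*π*t) := by
  unfold eloop
  rw [Complex.exp_mul_I]
  norm_cast
  simp only [Complex.add_im, Complex.ofReal_im, Complex.mul_im, Complex.I_re, Complex.I_im, Complex.ofReal_re]
  ring

lemma eloop_zero_eq_one : eloop 0 = eloop 1 := by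
  unfold eloop
  rw [show (π/4 - 2*π*(1:ℝ)) = (π/4 - 2*π*(0:ℝ)) + (-(2*π)) by ring]
  rw [Complex.ofReal_add, add_mul, Complex.exp_add]
  rw [show ((↑(-(2*π)) : ℂ) * Complex.I) = -(2*↑π*Complex.I) by push_cast; ring]
  rw [Complex.exp_neg, Complex.exp_two_pi_mul_I]
  norm_num

lemma eloop_re_pos {t : ℝ} (h0 : 0 ≤ t) (h1 : t ≤ 1/4) : 0 < (eloop t).re := by
  rw [eloop_re]
  apply Real.cos_pos_of_mem_Ioo
  constructor
  · nlinarith [Real.pi_pos]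
  · nlinarith [Real.pi_pos]

lemma eloop_im_neg {t : ℝ} (h0 : 1/4 ≤ t) (h1 : t ≤ 1/2) : (eloop t).im < 0 := by
  rw [eloop_im]
  apply Real.sin_neg_of_neg_of_neg_pi_lt
  · nlinarith [Real.pi_pos]
  · nlinarith [Real.pi_pos]

lemma eloop_re_neg {t : ℝ} (h0 : 1/2 ≤ t) (h1 : t ≤ 3/4) : (eloop t).re < 0 := by
  rw [eloop_re]
  rw [← Real.cos_neg]
  apply Real.cos_neg_of_pi_div_two_lt_of_lt
  · nlinarith [Real.pi_pos]
  · nlinarith [Real.pi_pos]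

lemma eloop_im_pos {t : ℝ} (h0 : 3/4 ≤ t) (h1 : t ≤ 1) : 0 < (eloop t).im := by
  rw [eloop_im]
  rw [← Real.sin_add_two_pi]
  apply Real.sin_pos_of_pos_of_lt_pi
  · nlinarith [Real.pi_pos]
  · nlinarith [Real.pi_pos]

end CrossAux


/-- A continuous nonvanishing map on the unit square which restricts to the
standard (clockwise) unit loop at `u = 0`, is a loop in `t` for each `u`, and is
constant at `u = 1`, cannot exist. -/
theorem no_null_homotopy (G : ℝ × ℝ → ℂ) (hG : Continuous G)
    (hne : ∀ q ∈ Icc (0:ℝ) 1 ×ˢ Icc (0:ℝ) 1, G q ≠ 0)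
    (hloop : ∀ u ∈ Icc (0:ℝ) 1, G (u, 0) = G (u, 1))
    (h0 : ∀ t ∈ Icc (0:ℝ) 1, G (0, t) = Complex.exp ((↑(π/4 - 2*π*t)) * Complex.I))
    (h1 : ∀ t ∈ Icc (0:ℝ) 1, G (1, t) = G (1, 0)) : False := by
  classical
  set K : Set (ℝ × ℝ) := Icc (0:ℝ) 1 ×ˢ Icc (0:ℝ) 1 with hK
  have hKc : IsCompact K := (isCompact_Icc).prod isCompact_Icc
  have hKne : K.Nonempty := ⟨(0,0), by constructor <;> exact ⟨le_refl _, zero_le_one⟩⟩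
  -- minimum modulus
  obtain ⟨q₀, hq₀K, hq₀min⟩ := hKc.exists_isMinOn hKne ((hG.norm).continuousOn)
  set m : ℝ := ‖G q₀‖ with hm
  have hmpos : 0 < m := norm_pos_iff.mpr (hne q₀ hq₀K)
  have hmle : ∀ q ∈ K, m ≤ ‖G q‖ := fun q hq => hq₀min hq
  -- uniform continuity
  have huc := hKc.uniformContinuousOn_of_continuous hG.continuousOn
  rw [Metric.uniformContinuousOn_iff] at huc
  obtain ⟨δ, hδ, hucd⟩ := huc m hmpos
  obtain ⟨n₀, hn₀⟩ := exists_nat_one_div_lt hδ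
  set N : ℕ := max (n₀ + 1) 3 with hN
  have hN3 : (3:ℕ) ≤ N := le_max_right _ _
  have hNpos : (0:ℝ) < N := by positivity
  have hmesh : (1:ℝ)/N < δ := by
    have h1 : ((n₀:ℝ) + 1) ≤ (N:ℝ) := by
      have := le_max_left (n₀+1) 3
      exact_mod_cast this
    calc (1:ℝ)/N ≤ 1/((n₀:ℝ)+1) := by
          apply one_div_le_one_div_of_le (by positivity) h1
      _ < δ := hn₀
  have hpt : ∀ k : ℕ, k ≤ N → (k:ℝ)/N ∈ Icc (0:ℝ) 1 := by
    intro k hk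
    constructor
    · positivity
    · rw [div_le_one hNpos]; exact_mod_cast hk
  have hGne : ∀ u ∈ Icc (0:ℝ) 1, ∀ t ∈ Icc (0:ℝ) 1, G (u, t) ≠ 0 := by
    intro u hu t ht; exact hne (u,t) ⟨hu, ht⟩
  -- the ratios have positive real part
  have hzre : ∀ u ∈ Icc (0:ℝ) 1, ∀ k : ℕ, k < N →
      0 < (G (u, ((k:ℝ)+1)/N) / G (u, (k:ℝ)/N)).re := by
    intro u hu k hk
    have hk1 : (((k:ℝ)+1)/N) ∈ Icc (0:ℝ) 1 := by
      have := hpt (k+1) hk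
      push_cast at this ⊢; exact this
    have hk0 : ((k:ℝ)/N) ∈ Icc (0:ℝ) 1 := hpt k hk.le
    set A := G (u, ((k:ℝ)+1)/N) with hA
    set B := G (u, (k:ℝ)/N) with hB
    have hBne : B ≠ 0 := hGne u hu _ hk0
    have hdist : dist A B < m := by
      apply hucd _ ⟨hu, hk1⟩ _ ⟨hu, hk0⟩
      rw [Prod.dist_eq]
      have hd2 : dist (((k:ℝ)+1)/N) ((k:ℝ)/N) = 1/N := by
        rw [Real.dist_eq, div_sub_div_same, add_sub_cancel_left, abs_of_pos (by positivity)]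
      rw [hd2]
      apply max_lt _ hmesh
      simpa using hδ
    have hBm : m ≤ ‖B‖ := hmle _ ⟨hu, hk0⟩
    have hBpos : (0:ℝ) < ‖B‖ := lt_of_lt_of_le hmpos hBm
    have hratio : ‖A/B - 1‖ < 1 := by
      rw [show A/B - 1 = (A - B)/B by field_simp, norm_div, div_lt_one hBpos]
      calc ‖A - B‖ < m := by simpa [dist_eq_norm] using hdist
        _ ≤ ‖B‖ := hBm
    have habs : |(A/B - 1).re| ≤ ‖A/B - 1‖ := Complex.abs_re_le_norm _
    have hre : (A/B).re = (A/B - 1).re + 1 := by simp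
    rw [hre]
    have := abs_le.mp habs
    linarith
  -- the winding sum
  set w : ℝ → ℝ := fun u =>
    ∑ k ∈ Finset.range N, Complex.arg (G (u, ((k:ℝ)+1)/N) / G (u, (k:ℝ)/N)) with hw
  -- continuity of w
  have hwc : ContinuousOn w (Icc 0 1) := by
    apply continuousOn_finset_sum
    intro k hk
    rw [Finset.mem_range] at hk
    have hk1 : (((k:ℝ)+1)/N) ∈ Icc (0:ℝ) 1 := by
      have := hpt (k+1) hk
      push_cast at this ⊢; exact this
    have hk0 : ((k:ℝ)/N) ∈ Icc (0:ℝ) 1 := hpt k hk.le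
    have hc1 : Continuous (fun u : ℝ => G (u, ((k:ℝ)+1)/N)) :=
      hG.comp (continuous_id.prodMk continuous_const)
    have hc0 : Continuous (fun u : ℝ => G (u, (k:ℝ)/N)) :=
      hG.comp (continuous_id.prodMk continuous_const)
    have hcr : ContinuousOn (fun u : ℝ => G (u, ((k:ℝ)+1)/N) / G (u, (k:ℝ)/N)) (Icc 0 1) :=
      hc1.continuousOn.div hc0.continuousOn (fun u hu => hGne u hu _ hk0)
    intro u hu
    have hslit : (G (u, ((k:ℝ)+1)/N) / G (u, (k:ℝ)/N)) ∈ Complex.slitPlane :=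
      Complex.mem_slitPlane_iff.mpr (Or.inl (hzre u hu k hk))
    exact ContinuousWithinAt.comp (t := Set.univ) (g := Complex.arg)
      (f := fun u : ℝ => G (u, ((k:ℝ)+1)/N) / G (u, (k:ℝ)/N))
      (Complex.continuousAt_arg hslit).continuousWithinAt (hcr u hu) (Set.mapsTo_univ _ _)
  -- value at 0
  have hw0 : w 0 = -(2*π) := by
    have hterm : ∀ k : ℕ, k < N →
        Complex.arg (G (0, ((k:ℝ)+1)/N) / G (0, (k:ℝ)/N)) = -(2*π)/N := by
      intro k hk
      have hk1 : (((k:ℝ)+1)/N) ∈ Icc (0:ℝ) 1 := by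
        have := hpt (k+1) hk
        push_cast at this ⊢; exact this
      have hk0 : ((k:ℝ)/N) ∈ Icc (0:ℝ) 1 := hpt k hk.le
      rw [h0 _ hk1, h0 _ hk0, ← Complex.exp_sub]
      have harg : (↑(π/4 - 2*π*(((k:ℝ)+1)/N)) * Complex.I - ↑(π/4 - 2*π*((k:ℝ)/N)) * Complex.I)
          = ↑(-(2*π)/N) * Complex.I := by
        rw [← sub_mul, ← Complex.ofReal_sub]
        congr 1
        push_cast
        field_simp
        ring
      rw [harg, Complex.exp_mul_I]
      apply Complex.arg_cos_add_sin_mul_I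
      constructor
      · rw [neg_div, neg_lt_neg_iff, div_lt_iff₀ hNpos]
        have : (3:ℝ) ≤ N := by exact_mod_cast hN3
        nlinarith [Real.pi_pos]
      · have : -(2*π)/N ≤ 0 := by
          apply div_nonpos_of_nonpos_of_nonneg _ hNpos.le
          nlinarith [Real.pi_pos]
        linarith [Real.pi_pos]
    simp only [hw]
    rw [Finset.sum_congr rfl (fun k hk => hterm k (Finset.mem_range.mp hk))]
    rw [Finset.sum_const, Finset.card_range, nsmul_eq_mul]
    field_simp
  -- value at 1
  have hw1 : w 1 = 0 := by
    simp only [hw]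
    apply Finset.sum_eq_zero
    intro k hk
    rw [Finset.mem_range] at hk
    have hk1 : (((k:ℝ)+1)/N) ∈ Icc (0:ℝ) 1 := by
      have := hpt (k+1) hk
      push_cast at this ⊢; exact this
    have hk0 : ((k:ℝ)/N) ∈ Icc (0:ℝ) 1 := hpt k hk.le
    rw [h1 _ hk1, h1 _ hk0, div_self (hGne 1 (by constructor <;> norm_num) 0 (by constructor <;> norm_num))]
    exact Complex.arg_one
  -- w u is a multiple of 2π, as an angle it is 0
  have hangle : ∀ u ∈ Icc (0:ℝ) 1, ((w u : ℝ) : Real.Angle) = 0 := by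
    intro u hu
    have : ((w u : ℝ) : Real.Angle) =
        ∑ k ∈ Finset.range N,
          ((Complex.arg (G (u, ((k:ℝ)+1)/N) / G (u, (k:ℝ)/N)) : ℝ) : Real.Angle) := by
      simp only [hw]
      exact map_sum Real.Angle.coeHom _ _
    rw [this]
    have hterm : ∀ k ∈ Finset.range N,
        ((Complex.arg (G (u, ((k:ℝ)+1)/N) / G (u, (k:ℝ)/N)) : ℝ) : Real.Angle)
          = (Complex.arg (G (u, (((k+1):ℕ):ℝ)/N)) : Real.Angle)
            - (Complex.arg (G (u, ((k:ℕ):ℝ)/N)) : Real.Angle) := by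
      intro k hk
      rw [Finset.mem_range] at hk
      have hk1 : (((k:ℝ)+1)/N) ∈ Icc (0:ℝ) 1 := by
        have := hpt (k+1) hk
        push_cast at this ⊢; exact this
      have hk0 : ((k:ℝ)/N) ∈ Icc (0:ℝ) 1 := hpt k hk.le
      rw [Complex.arg_div_coe_angle (hGne u hu _ hk1) (hGne u hu _ hk0)]
      norm_num
    rw [Finset.sum_congr rfl hterm]
    rw [Finset.sum_range_sub (f := fun k : ℕ => (Complex.arg (G (u, ((k:ℕ):ℝ)/N)) : Real.Angle))]
    have hNN : ((N:ℕ):ℝ)/N = 1 := div_self hNpos.ne'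
    have h00 : ((0:ℕ):ℝ)/N = 0 := by norm_num
    rw [hNN, h00, ← hloop u hu, sub_self]
  -- intermediate value: some u with w u = -π
  have hIVT := intermediate_value_Icc (zero_le_one) hwc
  have hmem : -π ∈ Icc (w 0) (w 1) := by
    rw [hw0, hw1]
    constructor <;> nlinarith [Real.pi_pos]
  obtain ⟨u, hu, hwu⟩ := hIVT hmem
  have := hangle u hu
  rw [hwu] at this
  rw [Real.Angle.coe_neg, Real.Angle.neg_coe_pi] at this
  exact Real.Angle.pi_ne_zero this

end Aux

open Real in
/-- a curve stabbing the rectangle `[a,b]×[c,d]` vertically and a curve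
stabbing it horizontally must intersect. -/
theorem stmt1 (a b c d : ℝ) (hab : a < b) (hcd : c < d)
    (γV γH : ℝ → ℝ × ℝ)
    (hγV : ContinuousOn γV (Icc 0 1)) (hγH : ContinuousOn γH (Icc 0 1))
    (hVin : γV '' Icc 0 1 ⊆ Icc a b ×ˢ Icc c d)
    (hHin : γH '' Icc 0 1 ⊆ Icc a b ×ˢ Icc c d)
    (hVtop : (γV 0).2 = d) (hVbot : (γV 1).2 = c)
    (hHleft : (γH 0).1 = a) (hHright : (γH 1).1 = b) :
    ((γV '' Icc 0 1) ∩ (γH '' Icc 0 1)).Nonempty := by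
  by_contra hcon
  rw [Set.not_nonempty_iff_eq_empty] at hcon
  have hdisj : ∀ s ∈ Icc (0:ℝ) 1, ∀ t ∈ Icc (0:ℝ) 1, γV s ≠ γH t := by
    intro s hs t ht h
    have hmem : γV s ∈ (γV '' Icc 0 1) ∩ (γH '' Icc 0 1) :=
      ⟨mem_image_of_mem _ hs, h ▸ mem_image_of_mem _ ht⟩
    rw [hcon] at hmem
    exact hmem
  -- clamped curves
  set V : ℝ → ℝ × ℝ := fun s => γV (clamp s) with hV
  set H : ℝ → ℝ × ℝ := fun t => γH (clamp t) with hH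
  have hVc : Continuous V := hγV.comp_continuous clamp_continuous clamp_mem
  have hHc : Continuous H := hγH.comp_continuous clamp_continuous clamp_mem
  have hVmem : ∀ s, V s ∈ Icc a b ×ˢ Icc c d := fun s =>
    hVin (mem_image_of_mem _ (clamp_mem s))
  have hHmem : ∀ t, H t ∈ Icc a b ×ˢ Icc c d := fun t =>
    hHin (mem_image_of_mem _ (clamp_mem t))
  have hVH : ∀ s t, V s ≠ H t := fun s t h =>
    hdisj _ (clamp_mem s) _ (clamp_mem t) h
  -- the difference map
  set Φ : ℝ × ℝ → ℂ := fun p =>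
    ↑((V p.1).1 - (H p.2).1) + ↑((V p.1).2 - (H p.2).2) * Complex.I with hΦ
  have hΦre : ∀ p, (Φ p).re = (V p.1).1 - (H p.2).1 := by
    intro p
    simp [hΦ]
  have hΦim : ∀ p, (Φ p).im = (V p.1).2 - (H p.2).2 := by
    intro p
    simp [hΦ]
  have hΦc : Continuous Φ := by
    apply Continuous.add
    · exact Complex.continuous_ofReal.comp ((hVc.comp continuous_fst).fst.sub
        ((hHc.comp continuous_snd).fst))
    · exact (Complex.continuous_ofReal.comp ((hVc.comp continuous_fst).snd.sub
        ((hHc.comp continuous_snd).snd))).mul continuous_const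
  have hΦne : ∀ p, Φ p ≠ 0 := by
    intro p h
    apply hVH p.1 p.2
    have h1 : (Φ p).re = 0 := by rw [h]; simp
    have h2 : (Φ p).im = 0 := by rw [h]; simp
    rw [hΦre] at h1
    rw [hΦim] at h2
    exact Prod.ext (by linarith) (by linarith)
  -- sign conditions
  have hre_nonneg : ∀ p : ℝ × ℝ, p.2 ≤ 0 → 0 ≤ (Φ p).re := by
    intro p hp
    rw [hΦre]
    have : (H p.2).1 = a := by
      rw [hH]; simp only []; rw [clamp_of_nonpos hp, hHleft]
    rw [this]
    have := (hVmem p.1).1.1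
    linarith
  have hre_nonpos : ∀ p : ℝ × ℝ, 1 ≤ p.2 → (Φ p).re ≤ 0 := by
    intro p hp
    rw [hΦre]
    have : (H p.2).1 = b := by
      rw [hH]; simp only []; rw [clamp_of_one_le hp, hHright]
    rw [this]
    have := (hVmem p.1).1.2
    linarith
  have him_nonneg : ∀ p : ℝ × ℝ, p.1 ≤ 0 → 0 ≤ (Φ p).im := by
    intro p hp
    rw [hΦim]
    have : (V p.1).2 = d := by
      rw [hV]; simp only []; rw [clamp_of_nonpos hp, hVtop]
    rw [this]
    have := (hHmem p.2).2.2
    linarith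
  have him_nonpos : ∀ p : ℝ × ℝ, 1 ≤ p.1 → (Φ p).im ≤ 0 := by
    intro p hp
    rw [hΦim]
    have : (V p.1).2 = c := by
      rw [hV]; simp only []; rw [clamp_of_one_le hp, hVbot]
    rw [this]
    have := (hHmem p.2).2.1
    linarith
  -- the null-homotopy
  set G : ℝ × ℝ → ℂ := fun q =>
    if q.1 ≤ 1/2 then
      ↑(1 - 2*q.1) * eloop q.2 + ↑(2*q.1) * Φ (sqLoop q.2)
    else
      Φ ((2 - 2*q.1) * (sqLoop q.2).1 + (2*q.1 - 1) * (1/2),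
         (2 - 2*q.1) * (sqLoop q.2).2 + (2*q.1 - 1) * (1/2)) with hG
  have hGc : Continuous G := by
    rw [hG]
    apply Continuous.if_le _ _ continuous_fst continuous_const
    · intro q hq
      rw [hq]
      norm_num
    · apply Continuous.add
      · exact (Complex.continuous_ofReal.comp
          (continuous_const.sub (continuous_const.mul continuous_fst))).mul
          (eloop_continuous.comp continuous_snd)
      · exact (Complex.continuous_ofReal.comp
          (continuous_const.mul continuous_fst)).mul
          (hΦc.comp (sqLoop_continuous.comp continuous_snd))
    · apply hΦc.comp
      apply Continuous.prodMk
      · exact ((continuous_const.sub (continuous_const.mul continuous_fst)).mul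
          ((sqLoop_continuous.comp continuous_snd).fst)).add
          (((continuous_const.mul continuous_fst).sub continuous_const).mul continuous_const)
      · exact ((continuous_const.sub (continuous_const.mul continuous_fst)).mul
          ((sqLoop_continuous.comp continuous_snd).snd)).add
          (((continuous_const.mul continuous_fst).sub continuous_const).mul continuous_const)
  have hGne : ∀ q ∈ Icc (0:ℝ) 1 ×ˢ Icc (0:ℝ) 1, G q ≠ 0 := by
    rintro ⟨u, t⟩ ⟨hu, ht⟩
    simp only [hG]
    rcases le_or_gt u (1/2) with hu2 | hu2
    · rw [if_pos hu2]
      rcases eq_or_lt_of_le hu2 with he | hlt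
      · subst he
        norm_num
        exact hΦne _
      · -- 1 - 2u > 0
        have hα : (0:ℝ) < 1 - 2*u := by linarith
        have hβ : (0:ℝ) ≤ 2*u := by linarith [hu.1]
        rcases le_or_gt t (1/4) with ht1 | ht1
        · -- bottom edge : Re > 0
          have hσ : sqLoop t = (4*t, 0) := if_pos ht1
          intro h0
          have hre0 : (↑(1 - 2*u) * eloop t + ↑(2*u) * Φ (sqLoop t)).re = 0 := by
            rw [h0]; rfl
          rw [Complex.add_re, Complex.re_ofReal_mul, Complex.re_ofReal_mul] at hre0
          have h1 : 0 < (eloop t).re := eloop_re_pos ht.1 ht1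
          have h2 : 0 ≤ (Φ (sqLoop t)).re := by
            apply hre_nonneg
            rw [hσ]
          nlinarith
        · rcases le_or_gt t (1/2) with ht2 | ht2
          · -- right edge : Im < 0
            have hσ : sqLoop t = (1, 4*t - 1) := by
              rw [sqLoop, if_neg (by linarith), if_pos ht2]
            intro h0
            have him0 : (↑(1 - 2*u) * eloop t + ↑(2*u) * Φ (sqLoop t)).im = 0 := by
              rw [h0]; rfl
            rw [Complex.add_im, Complex.im_ofReal_mul, Complex.im_ofReal_mul] at him0
            have h1 : (eloop t).im < 0 := eloop_im_neg ht1.le ht2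
            have h2 : (Φ (sqLoop t)).im ≤ 0 := by
              apply him_nonpos
              rw [hσ]
            nlinarith
          · rcases le_or_gt t (3/4) with ht3 | ht3
            · -- top edge : Re < 0
              have hσ : sqLoop t = (3 - 4*t, 1) := by
                rw [sqLoop, if_neg (by linarith), if_neg (by linarith), if_pos ht3]
              intro h0
              have hre0 : (↑(1 - 2*u) * eloop t + ↑(2*u) * Φ (sqLoop t)).re = 0 := by
                rw [h0]; rfl
              rw [Complex.add_re, Complex.re_ofReal_mul, Complex.re_ofReal_mul] at hre0
              have h1 : (eloop t).re < 0 := eloop_re_neg ht2.le ht3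
              have h2 : (Φ (sqLoop t)).re ≤ 0 := by
                apply hre_nonpos
                rw [hσ]
              nlinarith
            · -- left edge : Im > 0
              have hσ : sqLoop t = (0, 4 - 4*t) := by
                rw [sqLoop, if_neg (by linarith), if_neg (by linarith), if_neg (by linarith)]
              intro h0
              have him0 : (↑(1 - 2*u) * eloop t + ↑(2*u) * Φ (sqLoop t)).im = 0 := by
                rw [h0]; rfl
              rw [Complex.add_im, Complex.im_ofReal_mul, Complex.im_ofReal_mul] at him0
              have h1 : 0 < (eloop t).im := eloop_im_pos ht3.le ht.2
              have h2 : 0 ≤ (Φ (sqLoop t)).im := by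
                apply him_nonneg
                rw [hσ]
              nlinarith
    · rw [if_neg (not_le.mpr hu2)]
      exact hΦne _
  have hGloop : ∀ u ∈ Icc (0:ℝ) 1, G (u, 0) = G (u, 1) := by
    intro u _
    simp only [hG, sqLoop_zero, sqLoop_one, eloop_zero_eq_one]
  have hG0 : ∀ t ∈ Icc (0:ℝ) 1, G (0, t) =
      Complex.exp ((↑(π/4 - 2*π*t)) * Complex.I) := by
    intro t _
    simp only [hG]
    rw [if_pos (by norm_num : (0:ℝ) ≤ 1/2)]
    norm_num
    rw [eloop]
    congr 1
    push_cast
    ring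
  have hG1 : ∀ t ∈ Icc (0:ℝ) 1, G (1, t) = G (1, 0) := by
    intro t _
    simp only [hG]
    rw [if_neg (by norm_num : ¬ ((1:ℝ) ≤ 1/2))]
    rw [if_neg (by norm_num : ¬ ((1:ℝ) ≤ 1/2))]
    norm_num
  exact no_null_homotopy G hGc hGne hGloop hG0 hG1
end

section
/- Define sequences (s_i) and (p_i) by s_1 = p_1 = 1, s_{i+1} = (p_i + 1)·s_i + p_i², and p_{i+1} = 2·p_i². Then for every k ≥ 1, 2^(2^(k-1) − 1) ≤ s_k ≤ 2^(2^(k-1)) − 1. -/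
/-- for the sequences defined by `s 1 = p 1 = 1`,
`s (i+1) = (p i + 1) * s i + (p i)^2` and `p (i+1) = 2 * (p i)^2`,
one has `2 ^ (2 ^ (k-1) - 1) ≤ s k ≤ 2 ^ (2 ^ (k-1)) - 1` for all `k ≥ 1`. -/
theorem stmt5 (s p : ℕ → ℕ) (hs1 : s 1 = 1) (hp1 : p 1 = 1)
    (hs : ∀ i, 1 ≤ i → s (i + 1) = (p i + 1) * s i + (p i) ^ 2)
    (hp : ∀ i, 1 ≤ i → p (i + 1) = 2 * (p i) ^ 2) :
    ∀ k, 1 ≤ k → 2 ^ (2 ^ (k - 1) - 1) ≤ s k ∧ s k ≤ 2 ^ (2 ^ (k - 1)) - 1 := by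
  have key : ∀ k, 1 ≤ k → p k = 2 ^ (2 ^ (k - 1) - 1) ∧ p k ≤ s k ∧ s k ≤ 2 * p k - 1 := by
    intro k hk
    induction k, hk using Nat.le_induction with
    | base => simp [hs1, hp1]
    | succ n hn ih =>
      obtain ⟨hpn, h1, h2⟩ := ih
      have hp1' : 1 ≤ p n := by
        rw [hpn]; exact Nat.one_le_two_pow
      refine ⟨?_, ?_, ?_⟩
      · rw [hp n hn, hpn, ← pow_mul, ← pow_succ']
        congr 1
        have h2e : 1 ≤ 2 ^ (n - 1) := Nat.one_le_two_pow
        have hn1 : 2 ^ n = 2 * 2 ^ (n - 1) := by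
          rw [← pow_succ']
          congr 1
          omega
        have : n + 1 - 1 = n := rfl
        rw [this]
        omega
      · rw [hs n hn, hp n hn]
        nlinarith
      · rw [hs n hn, hp n hn]
        have h2' : s n + 1 ≤ 2 * p n := by omega
        have : (p n + 1) * s n + p n ^ 2 + 1 ≤ 2 * (2 * p n ^ 2) := by nlinarith
        omega
  intro k hk
  obtain ⟨hpk, h1, h2⟩ := key k hk
  refine ⟨by rw [← hpk]; exact h1, ?_⟩
  have heq : 2 * p k = 2 ^ (2 ^ (k - 1)) := by
    rw [hpk, ← pow_succ']
    congr 1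
    have : 1 ≤ 2 ^ (k - 1) := Nat.one_le_two_pow
    omega
  omega
end
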